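/- Consider the twice-repeated 3x3 symmetric game with strategies {C, D, E} and stage payoffs u(C,C)=(4,4), u(C,D)=(0,0), u(C,E)=(0,5), u(D,C)=(0,0), u(D,D)=(1,1), u(D,E)=(0,0), u(E,C)=(5,0), u(E,D)=(0,0), u(E,E)=(3,3), with no discounting. The strategy profile in which both players play C in period 1, play E in period 2 if (C,C) occurred, and play D in period 2 otherwise, is a subgame perfect equilibrium but is not a credible equilibrium. -/
import Mathlib


/-!  A formal model of multi-stage games (Ismail, "Credible equilibrium").

A multi-stage game `G = (G^1, …, G^T)` is modeled by stage strategy spaces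
`A t i` (possibly mixed strategies) for each stage `t` and player `i`, stage
payoff functions `u i t`, and a discount factor `δ`; a finite horizon `T` is
the special case where stage payoffs vanish from stage `T` on.  A subgame is
identified by a stage `k` together with a history (a path, of which only the
first `k` entries matter); two subgames are equivalent iff they start at the
same stage.  -/

namespace MSG

variable {ι : Type}

/-- A path of play: an action profile at every stage. -/
abbrev PlayPath (A : ℕ → ι → Type) := ∀ t, ∀ i, A t i

/-- A strategy of player `i`: an action at every stage `t` as a function of the
history, depending only on play before stage `t`. -/
structure PStrat (A : ℕ → ι → Type) (i : ι) where
  act : ∀ t, PlayPath A → A t i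
  adapted : ∀ t (p q : PlayPath A), (∀ s, s < t → p s = q s) → act t p = act t q

/-- A strategy profile. -/
abbrev Profile (A : ℕ → ι → Type) := ∀ i, PStrat A i

/-- The play induced by profile `σ` in the subgame starting at stage `k` after
history `h`, computed up to stage `n`. -/
noncomputable def outcomeUpTo (A : ℕ → ι → Type) (σ : Profile A) (k : ℕ) (h : PlayPath A) :
    ℕ → PlayPath A
  | 0 => h
  | t + 1 =>
    Function.update (outcomeUpTo A σ k h t) t
      (if t < k then h t else fun i => (σ i).act t (outcomeUpTo A σ k h t))

/-- The path of play induced by `σ` from the subgame `(k, h)`. -/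
noncomputable def outcome (A : ℕ → ι → Type) (σ : Profile A) (k : ℕ) (h : PlayPath A) :
    PlayPath A :=
  fun t => outcomeUpTo A σ k h (t + 1) t

/-- Player `i`'s discounted payoff in the subgame starting at stage `k` after
history `h` under profile `σ`. -/
noncomputable def subPayoff (A : ℕ → ι → Type) (u : ι → ∀ t, (∀ i, A t i) → ℝ) (δ : ℝ)
    (σ : Profile A) (k : ℕ) (h : PlayPath A) (i : ι) : ℝ :=
  ∑' t : ℕ, δ ^ t * u i (k + t) (outcome A σ k h (k + t))

/-- `σ` restricted to the subgame `(k, h)` is a Nash equilibrium. -/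
def NashFrom [DecidableEq ι] (A : ℕ → ι → Type) (u : ι → ∀ t, (∀ i, A t i) → ℝ) (δ : ℝ)
    (σ : Profile A) (k : ℕ) (h : PlayPath A) : Prop :=
  ∀ i (τ : PStrat A i),
    subPayoff A u δ (Function.update σ i τ) k h i ≤ subPayoff A u δ σ k h i

/-- Subgame perfect equilibrium: Nash in every subgame. -/
def SPE [DecidableEq ι] (A : ℕ → ι → Type) (u : ι → ∀ t, (∀ i, A t i) → ℝ) (δ : ℝ)
    (σ : Profile A) : Prop :=
  ∀ k h, NashFrom A u δ σ k h

/-- Replace the first `k` stages of `p` by the history `h`. -/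
def splice (A : ℕ → ι → Type) (k : ℕ) (h p : PlayPath A) : PlayPath A :=
  fun s => if s < k then h s else p s

/-- Player `i`'s strategy `σi` has the same restriction to the equivalent
subgames `(k, h)` and `(k, h')`. -/
def SameRestriction (A : ℕ → ι → Type) {i : ι} (σi : PStrat A i) (k : ℕ)
    (h h' : PlayPath A) : Prop :=
  ∀ t, k ≤ t → ∀ p : PlayPath A, σi.act t (splice A k h p) = σi.act t (splice A k h' p)

/-- Credible equilibrium: an SPE such that whenever a player's strategy differs
on two equivalent subgames, her payoffs in those subgames coincide. -/
def Credible [DecidableEq ι] (A : ℕ → ι → Type) (u : ι → ∀ t, (∀ i, A t i) → ℝ) (δ : ℝ)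
    (σ : Profile A) : Prop :=
  SPE A u δ σ ∧ ∀ k (h h' : PlayPath A) i, ¬ SameRestriction A (σ i) k h h' →
    subPayoff A u δ σ k h i = subPayoff A u δ σ k h' i

end MSG

namespace MSG

/-- The three actions of the symmetric 3×3 stage game. -/
inductive Act3 : Type
  | C | D | E
deriving DecidableEq

/-- Stage payoff to a player who plays `a` against `b`: `u(C,C)=4`,
`u(C,D)=0`, `u(C,E)=0`, `u(D,C)=0`, `u(D,D)=1`, `u(D,E)=0`, `u(E,C)=5`,
`u(E,D)=0`, `u(E,E)=3`. -/
def pay3 : Act3 → Act3 → ℝ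
  | .C, .C => 4 | .C, .D => 0 | .C, .E => 0
  | .D, .C => 0 | .D, .D => 1 | .D, .E => 0
  | .E, .C => 5 | .E, .D => 0 | .E, .E => 3

/-- Payoffs of the twice-repeated game (two players indexed by `Bool`,
stages `0` and `1`, no payoff afterwards). -/
def twiceU : Bool → ∀ _ : ℕ, (Bool → Act3) → ℝ :=
  fun i t p => if t < 2 then pay3 (p i) (p (!i)) else 0

/-- The profile: both players play `C` in period 1; in period 2 they play `E`
if `(C,C)` occurred in period 1 and `D` otherwise. -/
def ccThenEorD : Profile (fun (_ : ℕ) (_ : Bool) => Act3) :=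
  fun _ =>
    { act := fun t h =>
        if t = 0 then Act3.C
        else if ∀ j, h 0 j = Act3.C then Act3.E else Act3.D
      adapted := by
        intro t p q hpq
        cases t with
        | zero => rfl
        | succ t => have h0 : p 0 = q 0 := hpq 0 (Nat.succ_pos t); simp [h0] }

end MSG

namespace MSG
variable {ι : Type}

abbrev A2 : ℕ → Bool → Type := fun _ _ => Act3

lemma outcomeUpTo_succ (A : ℕ → ι → Type) (σ : Profile A) (k : ℕ) (h : PlayPath A) (t : ℕ) :
    outcomeUpTo A σ k h (t+1) =
      Function.update (outcomeUpTo A σ k h t) t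
        (if t < k then h t else fun i => (σ i).act t (outcomeUpTo A σ k h t)) := rfl

lemma outcome_eval (A : ℕ → ι → Type) (σ : Profile A) (k : ℕ) (h : PlayPath A) (t : ℕ) :
    outcome A σ k h t =
      if t < k then h t else fun i => (σ i).act t (outcomeUpTo A σ k h t) := by
  simp [outcome, outcomeUpTo_succ]

lemma upTo_zero (A : ℕ → ι → Type) (σ : Profile A) (k : ℕ) (h : PlayPath A) :
    outcomeUpTo A σ k h 0 = h := rfl

lemma subPayoff_two (σ : Profile A2) (k : ℕ) (h : PlayPath A2) (i : Bool) :
    subPayoff A2 twiceU 1 σ k h i =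
      twiceU i k (outcome A2 σ k h k) + twiceU i (k+1) (outcome A2 σ k h (k+1)) := by
  rw [subPayoff, tsum_eq_sum (s := ({0,1} : Finset ℕ))]
  · simp
  · intro b hb
    simp only [Finset.mem_insert, Finset.mem_singleton] at hb
    push_neg at hb
    have : ¬ (k + b < 2) := by omega
    simp [twiceU, this]

end MSG
namespace MSG

lemma cc_act0 (j : Bool) (p : PlayPath A2) : (ccThenEorD j).act 0 p = Act3.C := rfl

lemma cc_act1 (j : Bool) (p : PlayPath A2) :
    (ccThenEorD j).act 1 p = if ∀ j, p 0 j = Act3.C then Act3.E else Act3.D := rfl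

lemma upTo_one_k1 (σ : Profile A2) (h : PlayPath A2) : outcomeUpTo A2 σ 1 h 1 = h := by
  rw [outcomeUpTo_succ]; simp [upTo_zero, Function.update_eq_self]

lemma subPayoff_k1 (σ : Profile A2) (h : PlayPath A2) (i : Bool) :
    subPayoff A2 twiceU 1 σ 1 h i = pay3 ((σ i).act 1 h) ((σ (!i)).act 1 h) := by
  rw [subPayoff_two]
  have h1 : outcome A2 σ 1 h 1 = fun j => (σ j).act 1 h := by
    rw [outcome_eval]; simp [upTo_one_k1]
  simp [twiceU, h1]

lemma subPayoff_big (σ : Profile A2) (h : PlayPath A2) (i : Bool) (k : ℕ) (hk : 2 ≤ k) :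
    subPayoff A2 twiceU 1 σ k h i = 0 := by
  rw [subPayoff_two]
  have h1 : ¬ (k < 2) := by omega
  have h2 : ¬ (k + 1 < 2) := by omega
  simp [twiceU, h1, h2]

lemma subPayoff_k0 (σ : Profile A2) (h : PlayPath A2) (i : Bool) :
    subPayoff A2 twiceU 1 σ 0 h i =
      pay3 ((σ i).act 0 h) ((σ (!i)).act 0 h) +
      pay3 ((σ i).act 1 (Function.update h 0 (fun j => (σ j).act 0 h)))
           ((σ (!i)).act 1 (Function.update h 0 (fun j => (σ j).act 0 h))) := by
  rw [subPayoff_two]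
  have h0 : outcome A2 σ 0 h 0 = fun j => (σ j).act 0 h := by
    rw [outcome_eval]; simp [upTo_zero]
  have hu1 : outcomeUpTo A2 σ 0 h 1 = Function.update h 0 (fun j => (σ j).act 0 h) := by
    rw [outcomeUpTo_succ]; simp [upTo_zero]
  have h1 : outcome A2 σ 0 h 1 =
      fun j => (σ j).act 1 (Function.update h 0 (fun j => (σ j).act 0 h)) := by
    rw [outcome_eval]; simp [hu1]
  simp [twiceU, h0, h1]

end MSG

namespace MSG

lemma pay_le1 (a b : Act3) :
    pay3 a Act3.C + pay3 b (if a = Act3.C then Act3.E else Act3.D) ≤ 7 := by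
  cases a <;> cases b <;> simp [pay3] <;> norm_num

lemma pay_leE (b : Act3) : pay3 b Act3.E ≤ pay3 Act3.E Act3.E := by
  cases b <;> norm_num [pay3]

lemma pay_leD (b : Act3) : pay3 b Act3.D ≤ pay3 Act3.D Act3.D := by
  cases b <;> norm_num [pay3]

end MSG


open MSG in
/-- In the twice-repeated 3×3 game above (no discounting),
the profile "play `(C,C)` in period 1; play `(E,E)` in period 2 if `(C,C)`
occurred and `(D,D)` otherwise" is a subgame perfect equilibrium but not a
credible equilibrium. -/
theorem twice_repeated_SPE_not_credible :
    SPE (fun _ _ => Act3) twiceU 1 ccThenEorD ∧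
      ¬ Credible (fun _ _ => Act3) twiceU 1 ccThenEorD := by
  constructor
  · intro k h i τ
    have hne : (!i) ≠ i := by cases i <;> simp
    match k with
    | 0 =>
      rw [subPayoff_k0, subPayoff_k0]
      simp only [Function.update_self, Function.update_of_ne hne, cc_act0, cc_act1]
      cases i <;>
        simp only [Bool.forall_bool, Function.update_self, Function.update_of_ne hne,
          cc_act0, Bool.not_false, Bool.not_true, Function.update_of_ne (by simp : true ≠ false),
          Function.update_of_ne (by simp : false ≠ true), and_true, true_and] <;>
        norm_num [pay3] <;>
        exact le_trans (pay_le1 _ _) (by norm_num)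
    | 1 =>
      rw [subPayoff_k1, subPayoff_k1]
      simp only [Function.update_self, Function.update_of_ne hne, cc_act1]
      by_cases hc : ∀ j, h 0 j = Act3.C <;> simp only [hc, if_true, if_false]
      · exact pay_leE _
      · exact pay_leD _
    | (n+2) =>
      rw [subPayoff_big _ _ _ _ (by omega), subPayoff_big _ _ _ _ (by omega)]
  · rintro ⟨-, hcred⟩
    have hns : ¬ SameRestriction (fun _ _ => Act3) (ccThenEorD true) 1
        (fun _ _ => Act3.C) (fun _ _ => Act3.D) := by
      intro hsr
      have h2 := hsr 1 le_rfl (fun _ _ => Act3.C)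
      simp [cc_act1, splice] at h2
    have hh := hcred 1 _ _ true hns
    rw [subPayoff_k1, subPayoff_k1] at hh
    simp [cc_act1] at hh
    norm_num [pay3] at hh
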